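/- Fix integers k ≥ 1, l ≥ 0, m ≥ 1 and write points of ℝ^{k+l} as x = (x′, x″) ∈ ℝ^k × ℝ^l. On the partial jet space ℝ^{k+l} × ℝ^m × ℝ^{m×k} (jet coordinates z^i_ν, 1 ≤ i ≤ m, 1 ≤ ν ≤ k) define the partial Cartan distribution Ca_K at a point P = (x, y, z) as the linear span of the vectors D_ν(z) = ∂_{x′^ν} + Σ_i z^i_ν ∂_{y^i} (1 ≤ ν ≤ k), ∂_{x″^σ} (1 ≤ σ ≤ l), and ∂_{z^i_ν} (all i, ν). Let a′ : ℝ^k → ℝ^k, a″ : ℝ^l → ℝ^l and b : ℝ^k × ℝ^m → ℝ^m be smooth, and let ξ be the vector field on ℝ^{k+l} × ℝ^m with components ( a′(x′), a″(x″), b(x′, y) ). Define ξ¹ on ℝ^{k+l} × ℝ^m × ℝ^{m×k} by adjoining the z-components c^i_ν(x′, y, z) = ∂_{x′^ν} b^i(x′,y) + Σ_j z^j_ν ∂_{y^j} b^i(x′,y) − Σ_{ν₁=1}^{k} z^i_{ν₁} ∂_{x′^ν} a′^{ν₁}(x′). Then: (a) for every smooth vector field W on (an open subset of) ℝ^{k+l}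 × ℝ^m × ℝ^{m×k} with W(P) ∈ Ca_K(P) at every point P, the Lie bracket satisfies [ξ¹, W](P) ∈ Ca_K(P) at every point P; (b) ξ¹ is the unique smooth vector field with this property whose first blocks of components equal ( a′(x′), a″(x″), b(x′, y) ). -/

import Mathlib

/-- Lie bracket of two vector fields on (an open subset of) a real normed
vector space: `[V, W](P) = DW(P)·V(P) − DV(P)·W(P)`. -/
noncomputable def VBr {E : Type*} [NormedAddCommGroup E] [NormedSpace ℝ E]
    (V W : E → E) : E → E :=
  fun P => fderiv ℝ W P (V P) - fderiv ℝ V P (W P)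

/-- The partial Cartan distribution `Ca_K` on the partial jet space
`ℝ^{k+l} × ℝ^m × ℝ^{m×k}` at `P = ((x′,x″), y, z)`: span of
`D_ν = ∂_{x′^ν} + Σ_i z^i_ν ∂_{y^i}` (1 ≤ ν ≤ k), `∂_{x″^σ}` (1 ≤ σ ≤ l), and
all `∂_{z^i_ν}`. -/
noncomputable def CaK (k l m : ℕ)
    (P : ((Fin k → ℝ) × (Fin l → ℝ)) × (Fin m → ℝ) × (Fin m → Fin k → ℝ)) :
    Submodule ℝ (((Fin k → ℝ) × (Fin l → ℝ)) × (Fin m → ℝ) × (Fin m → Fin k → ℝ)) :=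
  Submodule.span ℝ
    ((Set.range fun ν : Fin k =>
        ((((Pi.single ν 1 : Fin k → ℝ), (0 : Fin l → ℝ)),
          (fun i => P.2.2 i ν : Fin m → ℝ), (0 : Fin m → Fin k → ℝ)) :
          ((Fin k → ℝ) × (Fin l → ℝ)) × (Fin m → ℝ) × (Fin m → Fin k → ℝ)))
      ∪ (Set.range fun σ : Fin l =>
        ((((0 : Fin k → ℝ), (Pi.single σ 1 : Fin l → ℝ)),
          (0 : Fin m → ℝ), (0 : Fin m → Fin k → ℝ)) :
          ((Fin k → ℝ) × (Fin l → ℝ)) × (Fin m → ℝ) × (Fin m → Fin k → ℝ)))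
      ∪ (Set.range fun pr : Fin m × Fin k =>
        ((((0 : Fin k → ℝ), (0 : Fin l → ℝ)), (0 : Fin m → ℝ),
          (Pi.single pr.1 (Pi.single pr.2 1) : Fin m → Fin k → ℝ)) :
          ((Fin k → ℝ) × (Fin l → ℝ)) × (Fin m → ℝ) × (Fin m → Fin k → ℝ))))

/-- Prolongation of the adapted vector field `ξ = (a′(x′), a″(x″), b(x′,y))`
to the partial jet space, with jet components
`c^i_ν = ∂_{x′^ν} b^i + Σ_j z^j_ν ∂_{y^j} b^i − Σ_{ν₁} z^i_{ν₁} ∂_{x′^ν} a′^{ν₁}`. -/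
noncomputable def prolK (k l m : ℕ)
    (a' : (Fin k → ℝ) → Fin k → ℝ) (a'' : (Fin l → ℝ) → Fin l → ℝ)
    (b : (Fin k → ℝ) × (Fin m → ℝ) → Fin m → ℝ) :
    (((Fin k → ℝ) × (Fin l → ℝ)) × (Fin m → ℝ) × (Fin m → Fin k → ℝ)) →
      (((Fin k → ℝ) × (Fin l → ℝ)) × (Fin m → ℝ) × (Fin m → Fin k → ℝ)) :=
  fun P =>
    ((a' P.1.1, a'' P.1.2), b (P.1.1, P.2.1),
      fun i ν =>
        fderiv ℝ (fun q => b q i) (P.1.1, P.2.1) (Pi.single ν 1, 0)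
          + ∑ j, P.2.2 j ν * fderiv ℝ (fun q => b q i) (P.1.1, P.2.1) (0, Pi.single j 1)
          - ∑ ν₁, P.2.2 i ν₁ * fderiv ℝ (fun t => a' t ν₁) P.1.1 (Pi.single ν 1))

abbrev Jet (k l m : ℕ) := ((Fin k → ℝ) × (Fin l → ℝ)) × (Fin m → ℝ) × (Fin m → Fin k → ℝ)



theorem mem_CaK_iff {k l m : ℕ} (P v : Jet k l m) :
    v ∈ CaK k l m P ↔ ∀ i, v.2.1 i = ∑ ν, P.2.2 i ν * v.1.1 ν := by
  constructor
  · intro hv i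
    let φ : Jet k l m →ₗ[ℝ] ℝ :=
      { toFun := fun w => w.2.1 i - ∑ ν, P.2.2 i ν * w.1.1 ν
        map_add' := by intro w₁ w₂; simp [Finset.sum_add_distrib, mul_add]; ring
        map_smul' := by
          intro c w
          simp only [Prod.smul_fst, Prod.smul_snd, Pi.smul_apply, smul_eq_mul, RingHom.id_apply]
          rw [mul_sub, Finset.mul_sum]
          congr 1
          exact Finset.sum_congr rfl fun x _ => by ring }
    have hle : CaK k l m P ≤ LinearMap.ker φ := by
      rw [CaK, Submodule.span_le]
      rintro w ((⟨ν, rfl⟩ | ⟨σ, rfl⟩) | ⟨pr, rfl⟩) <;>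
        simp [φ, Pi.single_apply, mul_comm]
    have := hle hv
    simp only [LinearMap.mem_ker, φ, LinearMap.coe_mk, AddHom.coe_mk] at this
    linarith [this]
  · intro hv
    have hrepr : v =
        (∑ ν, v.1.1 ν • ((((Pi.single ν 1 : Fin k → ℝ), (0 : Fin l → ℝ)),
          (fun i => P.2.2 i ν : Fin m → ℝ), (0 : Fin m → Fin k → ℝ)) : Jet k l m))
        + (∑ σ, v.1.2 σ • ((((0 : Fin k → ℝ), (Pi.single σ 1 : Fin l → ℝ)),
          (0 : Fin m → ℝ), (0 : Fin m → Fin k → ℝ)) : Jet k l m))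
        + (∑ pr : Fin m × Fin k, v.2.2 pr.1 pr.2 •
            ((((0 : Fin k → ℝ), (0 : Fin l → ℝ)), (0 : Fin m → ℝ),
            (Pi.single pr.1 (Pi.single pr.2 1) : Fin m → Fin k → ℝ)) : Jet k l m)) := by
      refine Prod.ext (Prod.ext ?_ ?_) (Prod.ext ?_ ?_) <;>
        · funext x
          try funext y
          simp [Prod.fst_sum, Prod.snd_sum, Finset.sum_apply, Pi.single_apply,
            Fintype.sum_prod_type, Finset.sum_ite_eq', mul_comm, hv]
    rw [hrepr]
    refine Submodule.add_mem _ (Submodule.add_mem _ ?_ ?_) ?_ <;>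
      refine Submodule.sum_mem _ fun x _ => Submodule.smul_mem _ _ (Submodule.subset_span ?_)
    · exact Or.inl (Or.inl ⟨x, rfl⟩)
    · exact Or.inl (Or.inr ⟨x, rfl⟩)
    · exact Or.inr ⟨x, rfl⟩



lemma hone : (1 : WithTop ℕ∞) ≤ ((⊤ : ℕ∞) : WithTop ℕ∞) := by
  exact_mod_cast le_top

lemma hplus : ((⊤ : ℕ∞) : WithTop ℕ∞) + 1 ≤ ((⊤ : ℕ∞) : WithTop ℕ∞) := by
  simp

lemma clm_pi_apply {n : ℕ} (L : (Fin n → ℝ) →L[ℝ] ℝ) (p : Fin n → ℝ) :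
    L p = ∑ i, p i * L (Pi.single i 1) := by
  conv_lhs => rw [← Finset.univ_sum_single p]
  rw [map_sum]
  refine Finset.sum_congr rfl fun i _ => ?_
  have : (Pi.single i (p i) : Fin n → ℝ) = p i • (Pi.single i (1:ℝ) : Fin n → ℝ) := by
    rw [← Pi.single_smul, smul_eq_mul, mul_one]
  rw [this, L.map_smul, smul_eq_mul]

lemma clm_prod_apply {n r : ℕ} (L : ((Fin n → ℝ) × (Fin r → ℝ)) →L[ℝ] ℝ)
    (p : Fin n → ℝ) (q : Fin r → ℝ) :
    L (p, q) = ∑ i, p i * L (Pi.single i 1, 0) + ∑ j, q j * L (0, Pi.single j 1) := by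
  have h1 : L (p, q) = L (p, 0) + L (0, q) := by
    rw [← map_add]; simp
  have h2 : L (p, 0) = (L.comp (ContinuousLinearMap.inl ℝ _ _)) p := rfl
  have h3 : L (0, q) = (L.comp (ContinuousLinearMap.inr ℝ _ _)) q := rfl
  rw [h1, h2, h3, clm_pi_apply, clm_pi_apply]
  rfl

lemma single_collapse {n : ℕ} (ν : Fin n) (c : Fin n → ℝ) :
    ∑ ν', c ν' * (Pi.single ν (1:ℝ) : Fin n → ℝ) ν' = c ν := by
  simp [Pi.single_apply, mul_ite, Finset.sum_ite_eq]



lemma hplus' : ((⊤ : ℕ∞) : WithTop ℕ∞) + 1 ≤ ((⊤ : ℕ∞) : WithTop ℕ∞) := by simp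

noncomputable def piX (k l m : ℕ) : Jet k l m →L[ℝ] (Fin k → ℝ) :=
  (ContinuousLinearMap.fst ℝ (Fin k → ℝ) (Fin l → ℝ)).comp
    (ContinuousLinearMap.fst ℝ ((Fin k → ℝ) × (Fin l → ℝ)) ((Fin m → ℝ) × (Fin m → Fin k → ℝ)))

noncomputable def piX2 (k l m : ℕ) : Jet k l m →L[ℝ] (Fin l → ℝ) :=
  (ContinuousLinearMap.snd ℝ (Fin k → ℝ) (Fin l → ℝ)).comp
    (ContinuousLinearMap.fst ℝ ((Fin k → ℝ) × (Fin l → ℝ)) ((Fin m → ℝ) × (Fin m → Fin k → ℝ)))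

noncomputable def piY (k l m : ℕ) : Jet k l m →L[ℝ] (Fin m → ℝ) :=
  (ContinuousLinearMap.fst ℝ (Fin m → ℝ) (Fin m → Fin k → ℝ)).comp
    (ContinuousLinearMap.snd ℝ ((Fin k → ℝ) × (Fin l → ℝ)) ((Fin m → ℝ) × (Fin m → Fin k → ℝ)))

noncomputable def piZ (k l m : ℕ) : Jet k l m →L[ℝ] (Fin m → Fin k → ℝ) :=
  (ContinuousLinearMap.snd ℝ (Fin m → ℝ) (Fin m → Fin k → ℝ)).comp
    (ContinuousLinearMap.snd ℝ ((Fin k → ℝ) × (Fin l → ℝ)) ((Fin m → ℝ) × (Fin m → Fin k → ℝ)))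

noncomputable def JJ (k l m : ℕ) : Jet k l m →L[ℝ] (Fin k → ℝ) × (Fin m → ℝ) :=
  (piX k l m).prod (piY k l m)

lemma contDiff_prolK {k l m : ℕ}
    {a' : (Fin k → ℝ) → Fin k → ℝ} {a'' : (Fin l → ℝ) → Fin l → ℝ}
    {b : (Fin k → ℝ) × (Fin m → ℝ) → Fin m → ℝ}
    (ha' : ContDiff ℝ (⊤ : ℕ∞) a') (ha'' : ContDiff ℝ (⊤ : ℕ∞) a'')
    (hb : ContDiff ℝ (⊤ : ℕ∞) b) :
    ContDiff ℝ (⊤ : ℕ∞) (prolK k l m a' a'' b) := by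
  have hzc : ∀ (j : Fin m) (ν : Fin k), ContDiff ℝ (⊤ : ℕ∞) (fun P : Jet k l m => P.2.2 j ν) :=
    fun j ν => ((ContinuousLinearMap.proj ν).comp
      ((ContinuousLinearMap.proj (φ := fun _ : Fin m => Fin k → ℝ) j).comp (piZ k l m))).contDiff
  have hbD : ∀ (i : Fin m) (v : (Fin k → ℝ) × (Fin m → ℝ)),
      ContDiff ℝ (⊤ : ℕ∞) (fun P : Jet k l m => fderiv ℝ (fun q => b q i) (P.1.1, P.2.1) v) := by
    intro i v
    have hbi : ContDiff ℝ (⊤ : ℕ∞) (fun q => b q i) := contDiff_pi.1 hb i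
    have hD := hbi.fderiv_right (m := (⊤ : ℕ∞)) hplus'
    exact (hD.clm_apply contDiff_const).comp (JJ k l m).contDiff
  have haD : ∀ (ν₁ : Fin k) (v : Fin k → ℝ),
      ContDiff ℝ (⊤ : ℕ∞) (fun P : Jet k l m => fderiv ℝ (fun t => a' t ν₁) P.1.1 v) := by
    intro ν₁ v
    have hai : ContDiff ℝ (⊤ : ℕ∞) (fun t => a' t ν₁) := contDiff_pi.1 ha' ν₁
    have hD := hai.fderiv_right (m := (⊤ : ℕ∞)) hplus'
    exact (hD.clm_apply contDiff_const).comp (piX k l m).contDiff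
  refine ContDiff.prodMk (ContDiff.prodMk ?_ ?_) (ContDiff.prodMk ?_ ?_)
  · exact ha'.comp (piX k l m).contDiff
  · exact ha''.comp (piX2 k l m).contDiff
  · exact hb.comp (JJ k l m).contDiff
  · refine contDiff_pi.2 fun i => contDiff_pi.2 fun ν => ContDiff.sub (ContDiff.add ?_ ?_) ?_
    · exact hbD i _
    · exact ContDiff.sum fun j _ => (hzc j ν).mul (hbD i _)
    · exact ContDiff.sum fun ν₁ _ => (hzc i ν₁).mul (haD ν₁ _)

lemma alg_identity {k m : ℕ} (i : Fin m) (z : Fin m → Fin k → ℝ) (u U : Fin k → ℝ)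
    (Bx : Fin k → ℝ) (By : Fin m → ℝ) (A : Fin k → Fin k → ℝ) :
    (∑ ν, (z i ν * U ν + u ν * (Bx ν + ∑ j, z j ν * By j - ∑ ν₁, z i ν₁ * A ν₁ ν)))
      - (∑ ν, u ν * Bx ν + ∑ j, (∑ ν, z j ν * u ν) * By j)
    = ∑ ν₁, z i ν₁ * (U ν₁ - ∑ ν, u ν * A ν₁ ν) := by
  have h1 : ∑ ν, u ν * ∑ j, z j ν * By j = ∑ j, (∑ ν, z j ν * u ν) * By j := by
    simp_rw [Finset.mul_sum, Finset.sum_mul]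
    rw [Finset.sum_comm]
    exact Finset.sum_congr rfl fun j _ => Finset.sum_congr rfl fun ν _ => by ring
  have h2 : ∑ ν, u ν * ∑ ν₁, z i ν₁ * A ν₁ ν = ∑ ν₁, z i ν₁ * ∑ ν, u ν * A ν₁ ν := by
    simp_rw [Finset.mul_sum]
    rw [Finset.sum_comm]
    exact Finset.sum_congr rfl fun ν₁ _ => Finset.sum_congr rfl fun ν _ => by ring
  simp only [mul_add, mul_sub, Finset.sum_add_distrib, Finset.sum_sub_distrib]
  rw [h1, h2]
  ring

lemma partA {k l m : ℕ}
    {a' : (Fin k → ℝ) → Fin k → ℝ} {a'' : (Fin l → ℝ) → Fin l → ℝ}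
    {b : (Fin k → ℝ) × (Fin m → ℝ) → Fin m → ℝ}
    (ha' : ContDiff ℝ (⊤ : ℕ∞) a') (ha'' : ContDiff ℝ (⊤ : ℕ∞) a'')
    (hb : ContDiff ℝ (⊤ : ℕ∞) b)
    (Ω : Set (Jet k l m)) (hΩ : IsOpen Ω)
    (W : Jet k l m → Jet k l m) (hW : ContDiffOn ℝ (⊤ : ℕ∞) W Ω)
    (hWmem : ∀ P ∈ Ω, W P ∈ CaK k l m P) :
    ∀ P ∈ Ω, VBr (prolK k l m a' a'' b) W P ∈ CaK k l m P := by
  intro P hP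
  have hone1 : ((⊤ : ℕ∞) : WithTop ℕ∞) ≠ 0 := by simp
  have hWd : DifferentiableAt ℝ W P :=
    (hW.differentiableOn hone1).differentiableAt (hΩ.mem_nhds hP)
  have hξd : DifferentiableAt ℝ (prolK k l m a' a'' b) P :=
    (contDiff_prolK ha' ha'' hb).differentiable hone1 P
  set h : Jet k l m := prolK k l m a' a'' b P with hh
  set Fw := fderiv ℝ W P with hFw
  set Fξ := fderiv ℝ (prolK k l m a' a'' b) P with hFξ
  let px : Fin k → (Jet k l m →L[ℝ] ℝ) := fun ν => (ContinuousLinearMap.proj ν).comp (piX k l m)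
  let py : Fin m → (Jet k l m →L[ℝ] ℝ) := fun i => (ContinuousLinearMap.proj i).comp (piY k l m)
  let pz : Fin m → Fin k → (Jet k l m →L[ℝ] ℝ) := fun i ν =>
    (ContinuousLinearMap.proj ν).comp
      ((ContinuousLinearMap.proj (φ := fun _ : Fin m => Fin k → ℝ) i).comp (piZ k l m))
  let Db : Fin m → (((Fin k → ℝ) × (Fin m → ℝ)) →L[ℝ] ℝ) := fun i =>
    fderiv ℝ (fun q => b q i) (P.1.1, P.2.1)
  let Da : Fin k → ((Fin k → ℝ) →L[ℝ] ℝ) := fun ν₁ => fderiv ℝ (fun t => a' t ν₁) P.1.1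
  have hbi : ∀ i, HasFDerivAt (fun q => b q i) (Db i) (P.1.1, P.2.1) := fun i =>
    ((((contDiff_pi.1 hb i).differentiable hone1) _).hasFDerivAt)
  have hai : ∀ ν₁, HasFDerivAt (fun t => a' t ν₁) (Da ν₁) P.1.1 := fun ν₁ =>
    ((((contDiff_pi.1 ha' ν₁).differentiable hone1) _).hasFDerivAt)
  -- components of the derivative of the prolongation
  have Eξy : ∀ i (v : Jet k l m), (Fξ v).2.1 i = Db i (v.1.1, v.2.1) := by
    intro i v
    have h1 : fderiv ℝ (fun Q : Jet k l m => b (Q.1.1, Q.2.1) i) P = (Db i).comp (JJ k l m) :=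
      by have := ((hbi i).comp P (JJ k l m).hasFDerivAt).fderiv; exact this
    have h2 : fderiv ℝ (fun Q : Jet k l m => b (Q.1.1, Q.2.1) i) P = (py i).comp Fξ :=
      (((py i).hasFDerivAt).comp P hξd.hasFDerivAt).fderiv
    have h3 : (py i).comp Fξ = (Db i).comp (JJ k l m) := h2.symm.trans h1
    exact congrArg (fun (L : Jet k l m →L[ℝ] ℝ) => L v) h3
  have Eξx : ∀ ν₁ (v : Jet k l m), (Fξ v).1.1 ν₁ = Da ν₁ v.1.1 := by
    intro ν₁ v
    have h1 : fderiv ℝ (fun Q : Jet k l m => a' Q.1.1 ν₁) P = (Da ν₁).comp (piX k l m) :=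
      by have := ((hai ν₁).comp P (piX k l m).hasFDerivAt).fderiv; exact this
    have h2 : fderiv ℝ (fun Q : Jet k l m => a' Q.1.1 ν₁) P = (px ν₁).comp Fξ :=
      (((px ν₁).hasFDerivAt).comp P hξd.hasFDerivAt).fderiv
    have h3 : (px ν₁).comp Fξ = (Da ν₁).comp (piX k l m) := h2.symm.trans h1
    exact congrArg (fun (L : Jet k l m →L[ℝ] ℝ) => L v) h3
  -- derivative of the contact constraint of W
  have hu : ∀ ν, HasFDerivAt (fun Q => (W Q).1.1 ν) ((px ν).comp Fw) P := fun ν =>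
    ((px ν).hasFDerivAt).comp P hWd.hasFDerivAt
  have hwc : ∀ i, HasFDerivAt (fun Q => (W Q).2.1 i) ((py i).comp Fw) P := fun i =>
    ((py i).hasFDerivAt).comp P hWd.hasFDerivAt
  have hzc : ∀ i ν, HasFDerivAt (fun Q : Jet k l m => Q.2.2 i ν) (pz i ν) P := fun i ν =>
    (pz i ν).hasFDerivAt
  have key : ∀ i, (py i).comp Fw
      - ∑ ν, (P.2.2 i ν • ((px ν).comp Fw) + (W P).1.1 ν • pz i ν) = 0 := by
    intro i
    have Hg : HasFDerivAt (fun Q : Jet k l m => (W Q).2.1 i - ∑ ν, Q.2.2 i ν * (W Q).1.1 ν)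
        ((py i).comp Fw - ∑ ν, (P.2.2 i ν • ((px ν).comp Fw) + (W P).1.1 ν • pz i ν)) P :=
      (hwc i).sub (HasFDerivAt.fun_sum fun ν _ => (hzc i ν).mul (hu ν))
    have hEE : (fun Q : Jet k l m => (W Q).2.1 i - ∑ ν, Q.2.2 i ν * (W Q).1.1 ν)
        =ᶠ[nhds P] (fun _ => (0 : ℝ)) := by
      filter_upwards [hΩ.mem_nhds hP] with Q hQ
      have hQ' := (mem_CaK_iff Q (W Q)).1 (hWmem Q hQ) i
      simp [hQ']
    calc (py i).comp Fw - ∑ ν, (P.2.2 i ν • ((px ν).comp Fw) + (W P).1.1 ν • pz i ν)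
        = fderiv ℝ (fun Q : Jet k l m => (W Q).2.1 i - ∑ ν, Q.2.2 i ν * (W Q).1.1 ν) P :=
          Hg.fderiv.symm
      _ = fderiv ℝ (fun _ : Jet k l m => (0 : ℝ)) P := hEE.fderiv_eq
      _ = 0 := fderiv_const_apply 0
  have keyh : ∀ i, (Fw h).2.1 i
      = ∑ ν, (P.2.2 i ν * (Fw h).1.1 ν + (W P).1.1 ν * h.2.2 i ν) := by
    intro i
    have := congrArg (fun (L : Jet k l m →L[ℝ] ℝ) => L h) (key i)
    simp only [ContinuousLinearMap.coe_sub', Pi.sub_apply, ContinuousLinearMap.coe_sum',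
      Finset.sum_apply, ContinuousLinearMap.add_apply, ContinuousLinearMap.coe_smul',
      Pi.smul_apply, ContinuousLinearMap.zero_apply, smul_eq_mul] at this
    have this' : (Fw h).2.1 i
        - ∑ ν, (P.2.2 i ν * (Fw h).1.1 ν + (W P).1.1 ν * h.2.2 i ν) = 0 := this
    linarith [this']
  have hWP := (mem_CaK_iff P (W P)).1 (hWmem P hP)
  rw [mem_CaK_iff]
  intro i
  have hVBr : VBr (prolK k l m a' a'' b) W P = Fw h - Fξ (W P) := rfl
  have hc : ∀ (i : Fin m) (ν : Fin k), h.2.2 i ν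
      = Db i (Pi.single ν 1, 0) + ∑ j, P.2.2 j ν * Db i (0, Pi.single j 1)
        - ∑ ν₁, P.2.2 i ν₁ * Da ν₁ (Pi.single ν 1) := fun i ν => rfl
  have hy : (VBr (prolK k l m a' a'' b) W P).2.1 i
      = (Fw h).2.1 i - Db i ((W P).1.1, (W P).2.1) := by
    rw [hVBr]; simp [Eξy]
  have hx : ∀ ν₁, (VBr (prolK k l m a' a'' b) W P).1.1 ν₁
      = (Fw h).1.1 ν₁ - Da ν₁ (W P).1.1 := by
    intro ν₁; rw [hVBr]; simp [Eξx]
  have hDa : ∀ ν₁, Da ν₁ (W P).1.1 = ∑ ν, (W P).1.1 ν * Da ν₁ (Pi.single ν 1) :=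
    fun ν₁ => clm_pi_apply _ _
  rw [hy]
  simp only [hx, hDa]
  rw [keyh i, clm_prod_apply (Db i) (W P).1.1 (W P).2.1]
  simp only [hc, hWP]
  exact alg_identity i P.2.2 (fun ν => (W P).1.1 ν) (fun ν => (Fw h).1.1 ν)
    (fun ν => Db i (Pi.single ν 1, 0)) (fun j => Db i (0, Pi.single j 1))
    (fun ν₁ ν => Da ν₁ (Pi.single ν 1))

lemma partB {k l m : ℕ}
    {a' : (Fin k → ℝ) → Fin k → ℝ} {a'' : (Fin l → ℝ) → Fin l → ℝ}
    {b : (Fin k → ℝ) × (Fin m → ℝ) → Fin m → ℝ}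
    (ha' : ContDiff ℝ (⊤ : ℕ∞) a') (hb : ContDiff ℝ (⊤ : ℕ∞) b)
    (V : Jet k l m → Jet k l m) (hV : ContDiff ℝ (⊤ : ℕ∞) V)
    (hVcomp : ∀ P, (V P).1.1 = a' P.1.1 ∧ (V P).1.2 = a'' P.1.2 ∧
      (V P).2.1 = b (P.1.1, P.2.1))
    (hVpres : ∀ Ω : Set (Jet k l m), IsOpen Ω →
      ∀ W : Jet k l m → Jet k l m, ContDiffOn ℝ (⊤ : ℕ∞) W Ω →
        (∀ P ∈ Ω, W P ∈ CaK k l m P) →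
        ∀ P ∈ Ω, VBr V W P ∈ CaK k l m P) :
    ∀ P, V P = prolK k l m a' a'' b P := by
  intro P
  have hone1 : ((⊤ : ℕ∞) : WithTop ℕ∞) ≠ 0 := by simp
  have hVd : DifferentiableAt ℝ V P := hV.differentiable hone1 P
  set FV := fderiv ℝ V P with hFV
  let px : Fin k → (Jet k l m →L[ℝ] ℝ) := fun ν => (ContinuousLinearMap.proj ν).comp (piX k l m)
  let py : Fin m → (Jet k l m →L[ℝ] ℝ) := fun i => (ContinuousLinearMap.proj i).comp (piY k l m)
  let Db : Fin m → (((Fin k → ℝ) × (Fin m → ℝ)) →L[ℝ] ℝ) := fun i =>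
    fderiv ℝ (fun q => b q i) (P.1.1, P.2.1)
  let Da : Fin k → ((Fin k → ℝ) →L[ℝ] ℝ) := fun ν₁ => fderiv ℝ (fun t => a' t ν₁) P.1.1
  have hbi : ∀ i, HasFDerivAt (fun q => b q i) (Db i) (P.1.1, P.2.1) := fun i =>
    ((((contDiff_pi.1 hb i).differentiable hone1) _).hasFDerivAt)
  have hai : ∀ ν₁, HasFDerivAt (fun t => a' t ν₁) (Da ν₁) P.1.1 := fun ν₁ =>
    ((((contDiff_pi.1 ha' ν₁).differentiable hone1) _).hasFDerivAt)
  have EVy : ∀ i (v : Jet k l m), (FV v).2.1 i = Db i (v.1.1, v.2.1) := by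
    intro i v
    have hfy : (fun Q : Jet k l m => (V Q).2.1 i) = fun Q : Jet k l m => b (Q.1.1, Q.2.1) i :=
      funext fun Q => by rw [(hVcomp Q).2.2]
    have h1 : fderiv ℝ (fun Q : Jet k l m => b (Q.1.1, Q.2.1) i) P = (Db i).comp (JJ k l m) :=
      by have := ((hbi i).comp P (JJ k l m).hasFDerivAt).fderiv; exact this
    have h2 : fderiv ℝ (fun Q : Jet k l m => (V Q).2.1 i) P = (py i).comp FV :=
      (((py i).hasFDerivAt).comp P hVd.hasFDerivAt).fderiv
    rw [hfy, h1] at h2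
    exact (congrArg (fun (L : Jet k l m →L[ℝ] ℝ) => L v) h2.symm)
  have EVx : ∀ ν₁ (v : Jet k l m), (FV v).1.1 ν₁ = Da ν₁ v.1.1 := by
    intro ν₁ v
    have hfx : (fun Q : Jet k l m => (V Q).1.1 ν₁) = fun Q : Jet k l m => a' Q.1.1 ν₁ :=
      funext fun Q => by rw [(hVcomp Q).1]
    have h1 : fderiv ℝ (fun Q : Jet k l m => a' Q.1.1 ν₁) P = (Da ν₁).comp (piX k l m) :=
      by have := ((hai ν₁).comp P (piX k l m).hasFDerivAt).fderiv; exact this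
    have h2 : fderiv ℝ (fun Q : Jet k l m => (V Q).1.1 ν₁) P = (px ν₁).comp FV :=
      (((px ν₁).hasFDerivAt).comp P hVd.hasFDerivAt).fderiv
    rw [hfx, h1] at h2
    exact (congrArg (fun (L : Jet k l m →L[ℝ] ℝ) => L v) h2.symm)
  have main : ∀ (ν : Fin k) (i : Fin m), (V P).2.2 i ν
      = Db i (Pi.single ν 1, 0) + ∑ j, P.2.2 j ν * Db i (0, Pi.single j 1)
        - ∑ ν₁, P.2.2 i ν₁ * Da ν₁ (Pi.single ν 1) := by
    intro ν i
    let Wf : Jet k l m → Jet k l m := fun Q =>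
      (((Pi.single ν 1 : Fin k → ℝ), (0 : Fin l → ℝ)),
        (fun i' => Q.2.2 i' ν : Fin m → ℝ), (0 : Fin m → Fin k → ℝ))
    let M : Jet k l m →L[ℝ] (Fin m → ℝ) :=
      ContinuousLinearMap.pi (fun i' => (ContinuousLinearMap.proj ν).comp
        ((ContinuousLinearMap.proj (φ := fun _ : Fin m => Fin k → ℝ) i').comp (piZ k l m)))
    let L : Jet k l m →L[ℝ] Jet k l m :=
      ContinuousLinearMap.prod 0 (M.prod 0)
    have hWsm : ContDiff ℝ (⊤ : ℕ∞) Wf :=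
      ContDiff.prodMk contDiff_const (ContDiff.prodMk M.contDiff contDiff_const)
    have hWmem : ∀ Q : Jet k l m, Wf Q ∈ CaK k l m Q := by
      intro Q
      rw [mem_CaK_iff]
      intro i'
      exact (by simpa [mul_comm] using (single_collapse ν (fun ν' => Q.2.2 i' ν')).symm :
        (Wf Q).2.1 i' = ∑ ν', Q.2.2 i' ν' * (Wf Q).1.1 ν')
    have hbr : VBr V Wf P ∈ CaK k l m P :=
      hVpres Set.univ isOpen_univ Wf hWsm.contDiffOn
        (fun Q _ => hWmem Q) P (Set.mem_univ P)
    have hWeq : Wf = fun Q => ((((Pi.single ν 1 : Fin k → ℝ), (0 : Fin l → ℝ)),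
        (0 : Fin m → ℝ), (0 : Fin m → Fin k → ℝ)) : Jet k l m) + L Q := by
      funext Q
      refine Prod.ext (Prod.ext ?_ ?_) (Prod.ext ?_ ?_) <;> simp [Wf, L, M, piZ]
    have hWder : HasFDerivAt Wf ((0 : Jet k l m →L[ℝ] Jet k l m) + L) P := by
      rw [hWeq]
      exact (hasFDerivAt_const _ _).add L.hasFDerivAt
    have hfd : fderiv ℝ Wf P = L := by rw [hWder.fderiv, zero_add]
    have hcond := (mem_CaK_iff P (VBr V Wf P)).1 hbr i
    have hbc : VBr V Wf P = L (V P) - FV (Wf P) := by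
      rw [VBr, hfd, hFV]
    have hy : (VBr V Wf P).2.1 i = (V P).2.2 i ν
        - (Db i (Pi.single ν 1, 0) + ∑ j, P.2.2 j ν * Db i (0, Pi.single j 1)) := by
      rw [hbc]
      have e1 : (L (V P) - FV (Wf P)).2.1 i = (V P).2.2 i ν - (FV (Wf P)).2.1 i := by
        simp [L, M, piZ]
      rw [e1, EVy i (Wf P)]
      have e2 : ((Wf P).1.1, (Wf P).2.1)
          = (((Pi.single ν 1 : Fin k → ℝ)), (fun i' => P.2.2 i' ν : Fin m → ℝ)) := rfl
      rw [e2, clm_prod_apply (Db i)]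
      have e3 : ∑ ν', (Pi.single ν (1:ℝ) : Fin k → ℝ) ν' * Db i (Pi.single ν' 1, 0)
          = Db i (Pi.single ν 1, 0) := by
        simpa [mul_comm] using single_collapse ν (fun ν' => Db i (Pi.single ν' 1, 0))
      rw [e3]
    have hx : ∀ ν₁, (VBr V Wf P).1.1 ν₁ = -(Da ν₁ (Pi.single ν 1)) := by
      intro ν₁
      rw [hbc]
      have e1 : (L (V P) - FV (Wf P)).1.1 ν₁ = 0 - (FV (Wf P)).1.1 ν₁ := by
        simp [L, M, piZ]
      rw [e1, EVx ν₁ (Wf P)]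
      have e2 : (Wf P).1.1 = (Pi.single ν 1 : Fin k → ℝ) := rfl
      rw [e2, zero_sub]
    rw [hy] at hcond
    simp only [hx, mul_neg] at hcond
    have : ∑ ν₁, -(P.2.2 i ν₁ * Da ν₁ (Pi.single ν 1))
        = -∑ ν₁, P.2.2 i ν₁ * Da ν₁ (Pi.single ν 1) := by
      rw [Finset.sum_neg_distrib]
    rw [this] at hcond
    linarith [hcond]
  obtain ⟨h1, h2, h3⟩ := hVcomp P
  refine Prod.ext (Prod.ext ?_ ?_) (Prod.ext ?_ ?_)
  · exact h1
  · exact h2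
  · exact h3
  · funext i ν
    exact main ν i

/-- (a) The prolongation `ξ¹` of an adapted vector field
`ξ = (a′(x′), a″(x″), b(x′,y))` infinitesimally preserves the partial Cartan
distribution `Ca_K`; (b) `ξ¹` is the unique smooth vector field with this
property whose first blocks of components are `(a′(x′), a″(x″), b(x′,y))`. -/
theorem partial_prolongation_preserves_partial_cartan_and_unique
    (k l m : ℕ) (hk : 1 ≤ k) (hm : 1 ≤ m)
    (a' : (Fin k → ℝ) → Fin k → ℝ) (a'' : (Fin l → ℝ) → Fin l → ℝ)
    (b : (Fin k → ℝ) × (Fin m → ℝ) → Fin m → ℝ)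
    (ha' : ContDiff ℝ (⊤ : ℕ∞) a') (ha'' : ContDiff ℝ (⊤ : ℕ∞) a'')
    (hb : ContDiff ℝ (⊤ : ℕ∞) b) :
    -- (a) infinitesimal invariance of the partial Cartan distribution
    (∀ Ω : Set (((Fin k → ℝ) × (Fin l → ℝ)) × (Fin m → ℝ) × (Fin m → Fin k → ℝ)),
      IsOpen Ω →
      ∀ W : (((Fin k → ℝ) × (Fin l → ℝ)) × (Fin m → ℝ) × (Fin m → Fin k → ℝ)) →
          (((Fin k → ℝ) × (Fin l → ℝ)) × (Fin m → ℝ) × (Fin m → Fin k → ℝ)),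
        ContDiffOn ℝ (⊤ : ℕ∞) W Ω →
        (∀ P ∈ Ω, W P ∈ CaK k l m P) →
        ∀ P ∈ Ω, VBr (prolK k l m a' a'' b) W P ∈ CaK k l m P)
    ∧
    -- (b) uniqueness
    (∀ V : (((Fin k → ℝ) × (Fin l → ℝ)) × (Fin m → ℝ) × (Fin m → Fin k → ℝ)) →
        (((Fin k → ℝ) × (Fin l → ℝ)) × (Fin m → ℝ) × (Fin m → Fin k → ℝ)),
      ContDiff ℝ (⊤ : ℕ∞) V →
      (∀ P, (V P).1.1 = a' P.1.1 ∧ (V P).1.2 = a'' P.1.2 ∧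
        (V P).2.1 = b (P.1.1, P.2.1)) →
      (∀ Ω : Set (((Fin k → ℝ) × (Fin l → ℝ)) × (Fin m → ℝ) × (Fin m → Fin k → ℝ)),
        IsOpen Ω →
        ∀ W : (((Fin k → ℝ) × (Fin l → ℝ)) × (Fin m → ℝ) × (Fin m → Fin k → ℝ)) →
            (((Fin k → ℝ) × (Fin l → ℝ)) × (Fin m → ℝ) × (Fin m → Fin k → ℝ)),
          ContDiffOn ℝ (⊤ : ℕ∞) W Ω →
          (∀ P ∈ Ω, W P ∈ CaK k l m P) →
          ∀ P ∈ Ω, VBr V W P ∈ CaK k l m P) →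
      ∀ P, V P = prolK k l m a' a'' b P) := by
  exact ⟨fun Ω hΩ W hW hWmem => partA ha' ha'' hb Ω hΩ W hW hWmem,
    fun V hV hVcomp hVpres => partB ha' hb V hV hVcomp hVpres⟩
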